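/- For the Laplace distribution characteristic function f(t) = 1/(1 + a²t²), written as f(t) = (1/2)·1/(1 - iat) + (1/2)·1/(1 + iat), if for each integer n ≥ 1 one defines g_n(t) = exp((1/a)(1 - (1 + a²t²)^{1/n})), then replacing e^{it} by g_n(t) and e^{-it} by g_n(-t) in the two summands (using that g_n is symmetric, i.e. g_n(-t) = g_n(t)) yields the normalized function f̃_n(t) = 1/(1 - a·ln g_n(t)), and this satisfies f̃_n(t)^n = f(t) for all real t. -/

import Mathlib

open Real

/-- The Laplace distribution with characteristic function `f t = 1/(1 + a²t²)` is casually
stable: with `g_n t = exp((1/a)(1 - (1 + a²t²)^(1/n)))` (which is symmetric, `g_n (-t) = g_n t`),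
the `g_n`-normalization `f̃_n t = 1/(1 - a * ln (g_n t))` (coming from replacing `e^{it}` by
`g_n t` and `e^{-it}` by `g_n (-t)` in the two summands of `f`) satisfies `f̃_n t ^ n = f t`. -/
theorem laplace_casual_stable (a : ℝ) (ha : 0 < a) (n : ℕ) (hn : 1 ≤ n) (t : ℝ) :
    (fun s : ℝ => Real.exp ((1 / a) * (1 - (1 + a ^ 2 * s ^ 2) ^ ((1 : ℝ) / n)))) (-t)
      = (fun s : ℝ => Real.exp ((1 / a) * (1 - (1 + a ^ 2 * s ^ 2) ^ ((1 : ℝ) / n)))) t ∧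
    ((1 : ℝ) / 2) * (1 / (1 - a * Real.log (Real.exp ((1 / a) * (1 - (1 + a ^ 2 * t ^ 2) ^ ((1 : ℝ) / n))))))
      + ((1 : ℝ) / 2) * (1 / (1 - a * Real.log (Real.exp ((1 / a) * (1 - (1 + a ^ 2 * (-t) ^ 2) ^ ((1 : ℝ) / n))))))
      = 1 / (1 - a * Real.log (Real.exp ((1 / a) * (1 - (1 + a ^ 2 * t ^ 2) ^ ((1 : ℝ) / n))))) ∧
    (1 / (1 - a * Real.log (Real.exp ((1 / a) * (1 - (1 + a ^ 2 * t ^ 2) ^ ((1 : ℝ) / n)))))) ^ n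
      = 1 / (1 + a ^ 2 * t ^ 2) := by
  have hX : (0:ℝ) < 1 + a ^ 2 * t ^ 2 := by positivity
  have hsimp : 1 - a * ((1 / a) * (1 - (1 + a ^ 2 * t ^ 2) ^ ((1 : ℝ) / n)))
      = (1 + a ^ 2 * t ^ 2) ^ ((1 : ℝ) / n) := by
    field_simp
    ring
  refine ⟨by simp, ?_, ?_⟩
  · simp only [Real.log_exp, neg_sq]
    ring
  · rw [Real.log_exp, hsimp, one_div, inv_pow, ← Real.rpow_natCast ((1 + a ^ 2 * t ^ 2) ^ ((1:ℝ)/n)) n,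
      ← Real.rpow_mul hX.le, one_div,
      inv_mul_cancel₀ (by exact_mod_cast Nat.one_le_iff_ne_zero.mp hn : (n:ℝ) ≠ 0),
      Real.rpow_one, one_div]
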